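/- Let E₁, E₂ be subspaces of ℂ^N with dim E₁ = dim E₂ = d ≥ 1, E₁ ∩ E₂ = {0}, and E₁ ∩ E₂^⊥ = {0} (orthogonal complement taken in ℂ^N). Set G = E₁ + E₂ and let Eᵢ' = G ∩ Eᵢ^⊥ denote the orthogonal complement of Eᵢ within G for i = 1, 2. Then the four linear maps obtained by restricting orthogonal projections — the projection onto E₂ restricted to E₁, the projection onto E₂ restricted to E₁', the projection onto E₂' restricted to E₁, and the projection onto E₂' restricted to E₁' — are all bijective. -/

import Mathlib

open Submodule Module

private lemma proj_bij {V : Type*} [NormedAddCommGroup V] [InnerProductSpace ℂ V]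
    [FiniteDimensional ℂ V] (X F : Submodule ℂ V)
    (hker : X ⊓ Fᗮ = ⊥) (hdim : finrank ℂ X = finrank ℂ F) :
    Function.Bijective (fun x : X => orthogonalProjection F (x : V)) := by
  have heq : (fun x : X => orthogonalProjection F (x : V)) =
      ((orthogonalProjection F).toLinearMap.comp X.subtype : X →ₗ[ℂ] F) := rfl
  rw [heq]
  set f := ((orthogonalProjection F).toLinearMap.comp X.subtype : X →ₗ[ℂ] F) with hf
  have hinj : Function.Injective f := by
    rw [← LinearMap.ker_eq_bot, Submodule.eq_bot_iff]
    intro x hx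
    have hx' : (x : V) ∈ Fᗮ := orthogonalProjection_eq_zero_iff.mp hx
    have hmem : (x : V) ∈ X ⊓ Fᗮ := ⟨x.2, hx'⟩
    rw [hker] at hmem
    exact Subtype.ext hmem
  exact ⟨hinj, (LinearMap.injective_iff_surjective_of_finrank_eq_finrank hdim).mp hinj⟩

/-- If `dim E₁ = dim E₂ = d ≥ 1`, `E₁ ∩ E₂ = 0` and `E₁ ∩ E₂^⊥ = 0`,
then with `G = E₁ + E₂`, `Eᵢ' = G ∩ Eᵢ^⊥`, the orthogonal projections onto `E₂` and `E₂'`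
restricted to `E₁` and to `E₁'` are all bijective. -/
theorem restricted_projections_bijective {N d : ℕ} (hd : 1 ≤ d)
    (E₁ E₂ : Submodule ℂ (EuclideanSpace ℂ (Fin N)))
    (h1 : Module.finrank ℂ E₁ = d) (h2 : Module.finrank ℂ E₂ = d)
    (h12 : E₁ ⊓ E₂ = ⊥) (h12perp : E₁ ⊓ E₂ᗮ = ⊥) :
    Function.Bijective
      (fun x : E₁ => orthogonalProjection E₂ (x : EuclideanSpace ℂ (Fin N))) ∧
    Function.Bijective
      (fun x : ((E₁ ⊔ E₂) ⊓ E₁ᗮ : Submodule ℂ (EuclideanSpace ℂ (Fin N))) =>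
        orthogonalProjection E₂ (x : EuclideanSpace ℂ (Fin N))) ∧
    Function.Bijective
      (fun x : E₁ =>
        orthogonalProjection ((E₁ ⊔ E₂) ⊓ E₂ᗮ) (x : EuclideanSpace ℂ (Fin N))) ∧
    Function.Bijective
      (fun x : ((E₁ ⊔ E₂) ⊓ E₁ᗮ : Submodule ℂ (EuclideanSpace ℂ (Fin N))) =>
        orthogonalProjection ((E₁ ⊔ E₂) ⊓ E₂ᗮ) (x : EuclideanSpace ℂ (Fin N))) := by
  set V := EuclideanSpace ℂ (Fin N)
  set G := E₁ ⊔ E₂ with hGdef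
  have hE1G : E₁ ≤ G := le_sup_left
  have hE2G : E₂ ≤ G := le_sup_right
  -- dimension of G
  have hG : finrank ℂ G = d + d := by
    have := Submodule.finrank_sup_add_finrank_inf_eq E₁ E₂
    rw [h12, finrank_bot, h1, h2, add_zero] at this
    exact this
  -- dimensions of the relative orthogonal complements
  have hd1 : finrank ℂ (E₁ᗮ ⊓ G : Submodule ℂ V) = d :=
    Submodule.finrank_add_inf_finrank_orthogonal' hE1G (by rw [h1, hG])
  have hd2 : finrank ℂ (E₂ᗮ ⊓ G : Submodule ℂ V) = d :=
    Submodule.finrank_add_inf_finrank_orthogonal' hE2G (by rw [h2, hG])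
  have hd1' : finrank ℂ (G ⊓ E₁ᗮ : Submodule ℂ V) = d := by rw [inf_comm]; exact hd1
  have hd2' : finrank ℂ (G ⊓ E₂ᗮ : Submodule ℂ V) = d := by rw [inf_comm]; exact hd2
  -- E₁ ⊔ E₂ᗮ = ⊤
  have htop : E₁ ⊔ E₂ᗮ = ⊤ := by
    apply Submodule.eq_top_of_finrank_eq
    have hs := Submodule.finrank_sup_add_finrank_inf_eq E₁ E₂ᗮ
    rw [h12perp, finrank_bot, add_zero, h1] at hs
    have ho := Submodule.finrank_add_finrank_orthogonal (K := E₂)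
    rw [h2] at ho
    rw [finrank_euclideanSpace_fin] at ho ⊢
    omega
  have h21 : E₁ᗮ ⊓ E₂ = ⊥ := by
    calc E₁ᗮ ⊓ E₂ = E₁ᗮ ⊓ E₂ᗮᗮ := by rw [Submodule.orthogonal_orthogonal]
    _ = (E₁ ⊔ E₂ᗮ)ᗮ := Submodule.inf_orthogonal _ _
    _ = (⊤ : Submodule ℂ V)ᗮ := by rw [htop]
    _ = ⊥ := Submodule.top_orthogonal_eq_bot
  -- (G ⊓ E₂ᗮ)ᗮ = Gᗮ ⊔ E₂
  have hperp2 : (G ⊓ E₂ᗮ)ᗮ = Gᗮ ⊔ E₂ := by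
    have h := Submodule.inf_orthogonal Gᗮ E₂
    rw [Submodule.orthogonal_orthogonal] at h
    rw [h, Submodule.orthogonal_orthogonal]
  have hGmod : G ⊓ (Gᗮ ⊔ E₂) = E₂ := by
    rw [← inf_sup_assoc_of_le _ hE2G, Submodule.inf_orthogonal_eq_bot, bot_sup_eq]
  -- kernel conditions
  have k1 : E₁ ⊓ E₂ᗮ = ⊥ := h12perp
  have k2 : (G ⊓ E₁ᗮ) ⊓ E₂ᗮ = ⊥ := by
    rw [inf_assoc, Submodule.inf_orthogonal, ← hGdef, Submodule.inf_orthogonal_eq_bot]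
  have k3 : E₁ ⊓ (G ⊓ E₂ᗮ)ᗮ = ⊥ := by
    rw [hperp2, ← inf_of_le_left hE1G, inf_assoc, hGmod, h12]
  have k4 : (G ⊓ E₁ᗮ) ⊓ (G ⊓ E₂ᗮ)ᗮ = ⊥ := by
    rw [hperp2, inf_comm G E₁ᗮ, inf_assoc, hGmod, h21]
  exact ⟨proj_bij E₁ E₂ k1 (by rw [h1, h2]),
    proj_bij (G ⊓ E₁ᗮ) E₂ k2 (by rw [hd1', h2]),
    proj_bij E₁ (G ⊓ E₂ᗮ) k3 (by rw [h1, hd2']),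
    proj_bij (G ⊓ E₁ᗮ) (G ⊓ E₂ᗮ) k4 (by rw [hd1', hd2'])⟩
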